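/- arXiv:2412.09546 — 3 statements merged into one kernel-verified Lean document; each statement's English description precedes it below -/
import Mathlib

section
/- Let p be a complex polynomial of degree at most n-1. If p maps 2n distinct points of the unit circle into the real line, then p is a real constant. -/
open Polynomial Complex

theorem stmt0 (n : ℕ) (hn : 1 ≤ n) (p : ℂ[X]) (hdeg : p.degree ≤ ((n - 1 : ℕ) : WithBot ℕ))
    (z : Fin (2 * n) → ℂ) (hinj : Function.Injective z)
    (hcirc : ∀ i, ‖z i‖ = 1)
    (hreal : ∀ i, (p.eval (z i)).im = 0) :
    ∃ c : ℝ, p = Polynomial.C (c : ℂ) := by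
  set q : ℂ[X] := ∑ k ∈ Finset.range n, C ((starRingEnd ℂ) (p.coeff k)) * X ^ (n - 1 - k) with hq
  have hpdeg : p.natDegree ≤ n - 1 := natDegree_le_iff_degree_le.mpr hdeg
  have hqe : ∀ w : ℂ, ‖w‖ = 1 → q.eval w = w ^ (n-1) * (starRingEnd ℂ) (p.eval w) := by
    intro w hw
    have hw0 : w ≠ 0 := by intro h; simp [h] at hw
    have hpe : p.eval w = ∑ k ∈ Finset.range n, p.coeff k * w ^ k :=
      eval_eq_sum_range' (lt_of_le_of_lt hpdeg (by omega)) w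
    rw [hq, eval_finset_sum, hpe, map_sum, Finset.mul_sum]
    apply Finset.sum_congr rfl
    intro k hk
    simp only [Finset.mem_range] at hk
    rw [eval_mul, eval_C, eval_pow, eval_X, map_mul, map_pow]
    rw [← Complex.inv_eq_conj hw, pow_sub₀ w hw0 (by omega)]
    field_simp
    simp [hw0, mul_assoc, ← mul_pow]
  have hqdeg : q.natDegree ≤ n - 1 := by
    apply natDegree_sum_le_of_forall_le
    intro k hk
    apply le_trans (natDegree_C_mul_le _ _)
    simp only [natDegree_X_pow]
    omega
  have hF : X ^ (n-1) * p - q = 0 := by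
    apply eq_zero_of_natDegree_lt_card_of_eval_eq_zero _ hinj
    · intro i
      have h1 : (starRingEnd ℂ) (p.eval (z i)) = p.eval (z i) :=
        Complex.conj_eq_iff_im.mpr (hreal i)
      simp only [eval_sub, eval_mul, eval_pow, eval_X, hqe (z i) (hcirc i)]
      rw [h1]; ring
    · rw [Fintype.card_fin]
      calc (X ^ (n-1) * p - q).natDegree ≤ max (X ^ (n-1) * p : ℂ[X]).natDegree q.natDegree :=
            natDegree_sub_le _ _
        _ ≤ max ((n-1) + (n-1)) (n-1) := by
            apply max_le_max _ hqdeg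
            apply le_trans (natDegree_mul_le)
            exact add_le_add (natDegree_X_pow_le _) hpdeg
        _ < 2 * n := by omega
  have heq : (X : ℂ[X]) ^ (n-1) * p = q := by linear_combination hF
  have hcoeff : ∀ k, q.coeff (n - 1 + k) = p.coeff k := by
    intro k
    rw [← heq, mul_comm, coeff_mul_X_pow']
    simp
  have hzero : ∀ k, 1 ≤ k → p.coeff k = 0 := by
    intro k hk
    rw [← hcoeff k, hq, finset_sum_coeff]
    apply Finset.sum_eq_zero
    intro j hj
    simp only [Finset.mem_range] at hj
    rw [coeff_C_mul, coeff_X_pow, if_neg (by omega), mul_zero]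
  have hc0 : q.coeff (n - 1) = (starRingEnd ℂ) (p.coeff 0) := by
    rw [hq, finset_sum_coeff]
    rw [Finset.sum_eq_single 0]
    · simp
    · intro j hj hj0
      simp only [Finset.mem_range] at hj
      rw [coeff_C_mul, coeff_X_pow, if_neg (by omega), mul_zero]
    · exact fun h => absurd (Finset.mem_range.mpr hn) h
  have hreal0 : p.coeff 0 = (starRingEnd ℂ) (p.coeff 0) := by
    have := hcoeff 0
    rw [add_zero] at this
    conv_lhs => rw [← this]
    exact hc0
  obtain ⟨c, hc⟩ := Complex.conj_eq_iff_real.mp hreal0.symm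
  refine ⟨c, ?_⟩
  ext k
  rcases Nat.eq_zero_or_pos k with rfl | hk
  · simp [hc]
  · rw [hzero k hk, coeff_C, if_neg (by omega)]
end

section
/- Let α₁,β₁,…,αₙ,βₙ be distinct points on the unit circle appearing in this cyclic order, and let F = ev_β ∘ ev_α⁻¹ : ℂⁿ → ℂⁿ. Then F(ℝⁿ) ∩ ℝⁿ is the real line spanned by the all-ones vector (1,…,1). -/
open Polynomial Complex

private lemma aux_exp_ne (a b : ℝ) (hab : a < b) (hb : b < a + 2 * Real.pi) :
    Complex.exp ((a : ℂ) * Complex.I) ≠ Complex.exp ((b : ℂ) * Complex.I) := by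
  intro h
  rw [Complex.exp_eq_exp_iff_exists_int] at h
  obtain ⟨k, hk⟩ := h
  have him : a = b + (k : ℝ) * (2 * Real.pi) := by
    have := congrArg Complex.im hk
    simpa using this
  have hπ := Real.pi_pos
  have h1 : (-1 : ℝ) < (k : ℝ) := by nlinarith
  have h2 : ((k : ℝ)) < 0 := by nlinarith
  have h1' : (-1 : ℤ) < k := by exact_mod_cast h1
  have h2' : k < 0 := by exact_mod_cast h2
  omega

private lemma unit_circ (θ : ℝ) :
    Complex.exp ((θ : ℂ) * Complex.I) * (starRingEnd ℂ) (Complex.exp ((θ : ℂ) * Complex.I)) = 1 := by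
  rw [← Complex.exp_conj, map_mul, Complex.conj_ofReal, Complex.conj_I, ← Complex.exp_add,
    show (θ : ℂ) * Complex.I + (θ : ℂ) * (-Complex.I) = 0 by ring, Complex.exp_zero]

private lemma key_poly (n : ℕ) (hn : 0 < n) (p : ℂ[X]) (hdeg : p.natDegree < n)
    {ι : Type} [Fintype ι] (hcard : 2 * n ≤ Fintype.card ι) (f : ι → ℂ)
    (hinj : Function.Injective f)
    (hunit : ∀ i, f i * (starRingEnd ℂ) (f i) = 1)
    (hreal : ∀ i, (p.eval (f i)).im = 0) :
    ∃ c : ℝ, p = C (c : ℂ) := by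
  set q : ℂ[X] := ∑ k ∈ Finset.range n, C ((starRingEnd ℂ) (p.coeff k)) * X ^ (n - 1 - k) with hqdef
  set g : ℂ[X] := X ^ (n - 1) * p - q with hgdef
  have hqdeg : q.natDegree ≤ n - 1 := by
    refine natDegree_sum_le_of_forall_le _ _ fun k hk => ?_
    exact le_trans (natDegree_C_mul_X_pow_le _ _) (by omega)
  have hgeval : ∀ i, g.eval (f i) = 0 := by
    intro i
    have hz := hunit i
    have hconj : (starRingEnd ℂ) (p.eval (f i)) = p.eval (f i) :=
      Complex.conj_eq_iff_im.mpr (hreal i)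
    have hev : p.eval (f i) = ∑ k ∈ Finset.range n, p.coeff k * f i ^ k :=
      eval_eq_sum_range' hdeg _
    have hq : q.eval (f i) = f i ^ (n - 1) * p.eval (f i) := by
      conv_rhs => rw [← hconj, hev]
      rw [hqdef, eval_finset_sum, map_sum, Finset.mul_sum]
      refine Finset.sum_congr rfl fun k hk => ?_
      simp only [eval_mul, eval_C, eval_pow, eval_X, map_mul, map_pow]
      have hk' : k ≤ n - 1 := by simp only [Finset.mem_range] at hk; omega
      have hpow : f i ^ (n - 1) * ((starRingEnd ℂ) (f i)) ^ k = f i ^ (n - 1 - k) := by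
        have h1 : f i ^ (n - 1) = f i ^ (n - 1 - k) * f i ^ k := by
          rw [← pow_add]; congr 1; omega
        rw [h1, mul_assoc, ← mul_pow, hz, one_pow, mul_one]
      calc (starRingEnd ℂ) (p.coeff k) * f i ^ (n - 1 - k)
          = (starRingEnd ℂ) (p.coeff k) * (f i ^ (n - 1) * ((starRingEnd ℂ) (f i)) ^ k) := by
            rw [hpow]
        _ = f i ^ (n - 1) * ((starRingEnd ℂ) (p.coeff k) * ((starRingEnd ℂ) (f i)) ^ k) := by ring
    rw [hgdef]
    simp only [eval_sub, eval_mul, eval_pow, eval_X, hq]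
    ring
  have hgdeg : g.natDegree < Fintype.card ι := by
    have h1 : (X ^ (n - 1) * p : ℂ[X]).natDegree ≤ (n - 1) + (n - 1) := by
      refine le_trans natDegree_mul_le ?_
      rw [natDegree_X_pow]
      omega
    have h2 : g.natDegree ≤ 2 * n - 2 := by
      refine le_trans (natDegree_sub_le _ _) (max_le (by omega) (by omega))
    omega
  have hg0 : g = 0 := eq_zero_of_natDegree_lt_card_of_eval_eq_zero g hinj hgeval hgdeg
  have heq : X ^ (n - 1) * p = q := by
    have := sub_eq_zero.mp (hgdef ▸ hg0)
    exact this
  have hreal0 : p.coeff 0 = (starRingEnd ℂ) (p.coeff 0) := by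
    have h := congrArg (fun r => Polynomial.coeff r (n - 1)) heq
    have hl : (X ^ (n - 1) * p : ℂ[X]).coeff (n - 1) = p.coeff 0 := by
      have := coeff_X_pow_mul p (n - 1) 0
      simpa using this
    have hr : q.coeff (n - 1) = (starRingEnd ℂ) (p.coeff 0) := by
      rw [hqdef, finset_sum_coeff]
      rw [Finset.sum_eq_single 0]
      · simp
      · intro k hk hk0
        have hne : ¬(n - 1 = n - 1 - k) := by
          simp only [Finset.mem_range] at hk; omega
        simp [coeff_C_mul, coeff_X_pow, hne]
      · intro h0; exact absurd (Finset.mem_range.mpr hn) h0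
    rw [hl, hr] at h
    exact h
  have hzero : ∀ j, 1 ≤ j → p.coeff j = 0 := by
    intro j hj
    by_cases hjn : j < n
    · have h := congrArg (fun r => Polynomial.coeff r (j + (n - 1))) heq
      have hl : (X ^ (n - 1) * p : ℂ[X]).coeff (j + (n - 1)) = p.coeff j :=
        coeff_X_pow_mul p (n - 1) j
      have hr : q.coeff (j + (n - 1)) = 0 := by
        rw [hqdef, finset_sum_coeff]
        refine Finset.sum_eq_zero fun k hk => ?_
        have hne : ¬(j + (n - 1) = n - 1 - k) := by
          simp only [Finset.mem_range] at hk; omega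
        simp [coeff_C_mul, coeff_X_pow, hne]
      rw [hl, hr] at h
      exact h
    · exact coeff_eq_zero_of_natDegree_lt (by omega)
  refine ⟨(p.coeff 0).re, ?_⟩
  ext m
  cases m with
  | zero =>
    simp only [coeff_C, if_pos rfl]
    have him : (p.coeff 0).im = 0 := Complex.conj_eq_iff_im.mp hreal0.symm
    exact Complex.ext (by simp) (by simp [him])
  | succ k =>
    simp [coeff_C, hzero (k + 1) (by omega)]

theorem stmt5 (n : ℕ) (hn : 0 < n) (t s : Fin n → ℝ)
    (h1 : ∀ j : Fin n, t j < s j)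
    (h2 : ∀ j : Fin n, ∀ h : (j : ℕ) + 1 < n, s j < t ⟨(j : ℕ) + 1, h⟩)
    (h3 : s ⟨n - 1, Nat.sub_lt hn one_pos⟩ < t ⟨0, hn⟩ + 2 * Real.pi)
    (α β : Fin n → ℂ)
    (hαdef : ∀ j, α j = Complex.exp ((t j : ℂ) * Complex.I))
    (hβdef : ∀ j, β j = Complex.exp ((s j : ℂ) * Complex.I))
    (F : (Fin n → ℂ) →ₗ[ℂ] (Fin n → ℂ))
    (hF : ∀ q : ℂ[X], q.degree < (n : ℕ) →
      F (fun i => q.eval (α i)) = fun i => q.eval (β i))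
    (hFinj : Function.Injective F) :
    (⇑F '' {w : Fin n → ℂ | ∀ i, (w i).im = 0}) ∩ {w : Fin n → ℂ | ∀ i, (w i).im = 0}
      = {w : Fin n → ℂ | ∃ c : ℝ, ∀ i, w i = (c : ℂ)} := by
  -- the combined angle sequence
  have hdiv : ∀ i : Fin (2 * n), (i : ℕ) / 2 < n := fun i => by
    have := i.isLt; omega
  set gfun : Fin (2 * n) → ℝ := fun i =>
    if (i : ℕ) % 2 = 0 then t ⟨(i : ℕ) / 2, hdiv i⟩ else s ⟨(i : ℕ) / 2, hdiv i⟩ with hgfun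
  have hstep : ∀ i : ℕ, ∀ h : i + 1 < 2 * n,
      gfun ⟨i, by omega⟩ < gfun ⟨i + 1, h⟩ := by
    intro i h
    rcases Nat.even_or_odd i with ⟨m, hm⟩ | ⟨m, hm⟩
    · simp only [hgfun]
      rw [if_pos (by omega), if_neg (by omega)]
      have hx := h1 (⟨i / 2, by omega⟩ : Fin n)
      convert hx using 2 <;> exact Fin.ext (by simp only [Fin.val_mk]; omega)
    · simp only [hgfun]
      rw [if_neg (by omega), if_pos (by omega)]
      have hlt : i / 2 + 1 < n := by omega
      have hx := h2 (⟨i / 2, by omega⟩ : Fin n) hlt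
      convert hx using 2 <;> exact Fin.ext (by simp only [Fin.val_mk]; omega)
  have hchain : ∀ d : ℕ, ∀ i : ℕ, ∀ h : i + d + 1 < 2 * n,
      gfun ⟨i, by omega⟩ < gfun ⟨i + d + 1, h⟩ := by
    intro d
    induction d with
    | zero => intro i h; exact hstep i h
    | succ d ih =>
      intro i h
      exact lt_trans (ih i (by omega)) (hstep (i + d + 1) h)
  have hmono : ∀ i j : Fin (2 * n), i < j → gfun i < gfun j := by
    intro i j hij
    have hij' : (i : ℕ) < (j : ℕ) := hij
    have hje : j = ⟨(i : ℕ) + ((j : ℕ) - (i : ℕ) - 1) + 1, by omega⟩ := Fin.ext (by simp; omega)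
    rw [hje]
    exact hchain _ _ _
  have hg0 : gfun ⟨0, by omega⟩ = t ⟨0, hn⟩ := by
    simp only [hgfun]
    norm_num
  have hglast : gfun ⟨2 * n - 1, by omega⟩ = s ⟨n - 1, Nat.sub_lt hn one_pos⟩ := by
    simp only [hgfun]
    rw [if_neg (by omega)]
    congr 1
    exact Fin.ext (by simp; omega)
  have hlb : ∀ i : Fin (2 * n), t ⟨0, hn⟩ ≤ gfun i := by
    intro i
    rcases Nat.eq_zero_or_pos (i : ℕ) with h0 | h0
    · have : i = ⟨0, by omega⟩ := Fin.ext h0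
      rw [this, hg0]
    · rw [← hg0]
      exact le_of_lt (hmono _ _ (by exact h0))
  have hub : ∀ i : Fin (2 * n), gfun i ≤ s ⟨n - 1, Nat.sub_lt hn one_pos⟩ := by
    intro i
    rcases Nat.lt_or_ge (i : ℕ) (2 * n - 1) with h0 | h0
    · rw [← hglast]
      exact le_of_lt (hmono _ _ (by exact h0))
    · have : i = ⟨2 * n - 1, by omega⟩ := Fin.ext (show (i : ℕ) = 2 * n - 1 by have := i.isLt; omega)
      rw [this, hglast]
  have hexp_ne : ∀ i j : Fin (2 * n), i ≠ j →
      Complex.exp ((gfun i : ℂ) * Complex.I) ≠ Complex.exp ((gfun j : ℂ) * Complex.I) := by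
    have key : ∀ i j : Fin (2 * n), i < j →
        Complex.exp ((gfun i : ℂ) * Complex.I) ≠ Complex.exp ((gfun j : ℂ) * Complex.I) := by
      intro i j hij
      refine aux_exp_ne _ _ (hmono _ _ hij) ?_
      calc gfun j ≤ s ⟨n - 1, Nat.sub_lt hn one_pos⟩ := hub j
        _ < t ⟨0, hn⟩ + 2 * Real.pi := h3
        _ ≤ gfun i + 2 * Real.pi := by linarith [hlb i]
    intro i j hij
    rcases lt_or_gt_of_ne hij with h | h
    · exact key i j h
    · exact (key j i h).symm
  -- the index embedding
  set idx : Fin n ⊕ Fin n → Fin (2 * n) :=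
    Sum.elim (fun j => ⟨2 * (j : ℕ), by have := j.isLt; omega⟩)
      (fun j => ⟨2 * (j : ℕ) + 1, by have := j.isLt; omega⟩) with hidxdef
  have hgt : ∀ j : Fin n, gfun (idx (Sum.inl j)) = t j := by
    intro j
    simp only [hidxdef, Sum.elim_inl, hgfun]
    rw [if_pos (by omega)]
    congr 1
    exact Fin.ext (show 2 * (j : ℕ) / 2 = (j : ℕ) by omega)
  have hgs : ∀ j : Fin n, gfun (idx (Sum.inr j)) = s j := by
    intro j
    simp only [hidxdef, Sum.elim_inr, hgfun]
    rw [if_neg (by omega)]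
    congr 1
    exact Fin.ext (show (2 * (j : ℕ) + 1) / 2 = (j : ℕ) by omega)
  have hE : ∀ x, Sum.elim α β x = Complex.exp ((gfun (idx x) : ℂ) * Complex.I) := by
    rintro (j | j)
    · rw [Sum.elim_inl, hgt, hαdef]
    · rw [Sum.elim_inr, hgs, hβdef]
  have hidxinj : Function.Injective idx := by
    rintro (j | j) (k | k) h <;> simp only [hidxdef, Sum.elim_inl, Sum.elim_inr, Fin.mk.injEq] at h
    · exact congrArg Sum.inl (Fin.ext (by omega))
    · omega
    · omega
    · exact congrArg Sum.inr (Fin.ext (by omega))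
  have hEinj : Function.Injective (Sum.elim α β) := by
    intro x y hxy
    by_contra hne
    exact hexp_ne (idx x) (idx y) (fun h => hne (hidxinj h)) (by rw [← hE, ← hE, hxy])
  have hαinj : Function.Injective α := fun a b h =>
    Sum.inl.inj (hEinj (show Sum.elim α β (Sum.inl a) = Sum.elim α β (Sum.inl b) from h))
  have hunit : ∀ x, Sum.elim α β x * (starRingEnd ℂ) (Sum.elim α β x) = 1 := by
    intro x
    rw [hE x]
    exact unit_circ _
  ext w
  simp only [Set.mem_inter_iff, Set.mem_image, Set.mem_setOf_eq]
  constructor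
  · rintro ⟨⟨v, hv, rfl⟩, hw⟩
    have hinjOn : Set.InjOn α ↑(Finset.univ : Finset (Fin n)) := hαinj.injOn
    set p := (Lagrange.interpolate Finset.univ α) v with hpdef
    have hpdeg : p.degree < (n : ℕ) := by
      have := Lagrange.degree_interpolate_lt v hinjOn
      simpa [hpdef] using this
    have hpα : ∀ i, p.eval (α i) = v i := fun i =>
      Lagrange.eval_interpolate_at_node v hinjOn (Finset.mem_univ i)
    have hFv : F v = fun i => p.eval (β i) := by
      rw [← hF p hpdeg]
      congr 1
      funext i
      exact (hpα i).symm
    have hpnat : p.natDegree < n := by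
      rcases eq_or_ne p 0 with h | h
      · rw [h]; simpa using hn
      · exact (natDegree_lt_iff_degree_lt h).mpr hpdeg
    have hcard : 2 * n ≤ Fintype.card (Fin n ⊕ Fin n) := by simp; omega
    obtain ⟨c, hc⟩ := key_poly n hn p hpnat hcard (Sum.elim α β) hEinj hunit (by
      rintro (j | j)
      · simp only [Sum.elim_inl]
        rw [hpα j]
        exact hv j
      · simp only [Sum.elim_inr]
        have : p.eval (β j) = F v j := by rw [hFv]
        rw [this]
        exact hw j)
    refine ⟨c, fun i => ?_⟩
    rw [hFv]
    simp [hc]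
  · rintro ⟨c, hc⟩
    have hdegC : (C (c : ℂ)).degree < (n : ℕ) :=
      lt_of_le_of_lt degree_C_le (by exact_mod_cast hn)
    have hq := hF (C (c : ℂ)) hdegC
    simp only [eval_C] at hq
    constructor
    · exact ⟨fun _ => (c : ℂ), fun i => by simp, by rw [hq]; funext i; exact (hc i).symm⟩
    · intro i
      rw [hc i]
      simp
end

section
/- Let α, β be n-tuples of distinct complex numbers and F = ev_β ∘ ev_α⁻¹. Suppose a complex number λ and polynomial p of degree < n satisfy ev_α(p) ∈ ℝⁿ and ev_β(p) ∈ ℝⁿ, where all 2n points α₁,…,αₙ,β₁,…,βₙ are distinct and lie on the unit circle. Then p is a real constant, and hence ev_α(p) = ev_β(p) = λ·(1,…,1) for some λ ∈ ℝ. -/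
open Polynomial Complex

theorem stmt18 (n : ℕ) (hn : 0 < n) (α β : Fin n → ℂ)
    (hαinj : Function.Injective α) (hβinj : Function.Injective β)
    (hdisj : ∀ i j, α i ≠ β j)
    (hαc : ∀ i, ‖α i‖ = 1) (hβc : ∀ i, ‖β i‖ = 1)
    (p : ℂ[X]) (hp : p.degree < (n : ℕ))
    (hra : ∀ i, (p.eval (α i)).im = 0) (hrb : ∀ i, (p.eval (β i)).im = 0) :
    ∃ lam : ℝ, p = Polynomial.C ((lam : ℂ)) ∧
      (∀ i, p.eval (α i) = (lam : ℂ)) ∧ ∀ i, p.eval (β i) = (lam : ℂ) := by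
  set N := n - 1 with hN
  have hnd : p.natDegree ≤ N := by
    rcases eq_or_ne p 0 with rfl | hp0
    · simp
    · have := (natDegree_lt_iff_degree_lt hp0).mpr hp
      omega
  set q : ℂ[X] := p.map (starRingEnd ℂ) with hq
  have hqnd : q.natDegree ≤ N := natDegree_map_le.trans hnd
  set r : ℂ[X] := X ^ N * p - reflect N q with hr
  -- key evaluation fact
  have key : ∀ z : ℂ, ‖z‖ = 1 → (p.eval z).im = 0 → r.eval z = 0 := by
    intro z hz him
    have hz0 : z ≠ 0 := by
      intro h; rw [h] at hz; simp at hz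
    have : Invertible z := invertibleOfNonzero hz0
    have hmul := eval₂_reflect_mul_pow (RingHom.id ℂ) (⅟ z) N q hqnd
    simp only [eval₂_eq_eval_map, Polynomial.map_id, invOf_invOf, invOf_eq_inv] at hmul
    -- hmul : (reflect N q).eval z * (z⁻¹) ^ N = q.eval z⁻¹
    have hrefl : (reflect N q).eval z = q.eval z⁻¹ * z ^ N := by
      have h2 := congrArg (· * z ^ N) hmul
      simpa [mul_assoc, ← mul_pow, inv_mul_cancel₀ hz0] using h2
    have hconjz : z⁻¹ = (starRingEnd ℂ) z := by
      rw [Complex.inv_def]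
      simp [Complex.normSq_eq_norm_sq, hz]
    have hqe : q.eval z⁻¹ = (starRingEnd ℂ) (p.eval z) := by
      rw [hconjz, hq, eval_map, eval₂_hom]
    have hreal : (starRingEnd ℂ) (p.eval z) = p.eval z := by
      rw [Complex.conj_eq_iff_im]; exact him
    simp only [hr, eval_sub, eval_mul, eval_pow, eval_X, hrefl, hqe, hreal]
    ring
  -- r vanishes at 2n distinct points, degree < 2n, so r = 0
  have hrz : r = 0 := by
    have hinj : Function.Injective (Sum.elim α β : Fin n ⊕ Fin n → ℂ) := by
      rintro (i | i) (j | j) h <;> simp only [Sum.elim_inl, Sum.elim_inr] at h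
      · rw [hαinj h]
      · exact absurd h (hdisj i j)
      · exact absurd h.symm (hdisj j i)
      · rw [hβinj h]
    apply Polynomial.eq_zero_of_natDegree_lt_card_of_eval_eq_zero r hinj
    · rintro (i | i)
      · exact key (α i) (hαc i) (hra i)
      · exact key (β i) (hβc i) (hrb i)
    · have h1 : (X ^ N * p : ℂ[X]).natDegree ≤ N + N := by
        apply (natDegree_mul_le).trans
        have : (X ^ N : ℂ[X]).natDegree ≤ N := natDegree_X_pow_le N
        omega
      have h2 : (reflect N q).natDegree ≤ N := by
        apply natDegree_le_iff_coeff_eq_zero.mpr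
        intro m hm
        rw [coeff_reflect, revAt_eq_self_of_lt hm]
        exact coeff_eq_zero_of_natDegree_lt (lt_of_le_of_lt hqnd hm)
      have : r.natDegree ≤ N + N := by
        apply (natDegree_sub_le _ _).trans
        omega
      simp only [Fintype.card_sum, Fintype.card_fin]
      omega
  have heq : X ^ N * p = reflect N q := sub_eq_zero.mp (hr ▸ hrz)
  -- coefficients of p above 0 vanish
  have hcoeff : ∀ k, 1 ≤ k → p.coeff k = 0 := by
    intro k hk
    have h1 : (X ^ N * p).coeff (N + k) = p.coeff k := by
      rw [Nat.add_comm, coeff_X_pow_mul]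
    have h2 : (reflect N q).coeff (N + k) = q.coeff (N + k) := by
      rw [coeff_reflect, revAt_eq_self_of_lt (by omega)]
    have h3 : q.coeff (N + k) = 0 := coeff_eq_zero_of_natDegree_lt (by omega)
    rw [heq, h2, h3] at h1
    exact h1.symm
  -- p.coeff 0 is real
  have hreal0 : (starRingEnd ℂ) (p.coeff 0) = p.coeff 0 := by
    have h1 : (X ^ N * p).coeff N = p.coeff 0 := by
      simpa using coeff_X_pow_mul p N 0
    have h2 : (reflect N q).coeff N = q.coeff 0 := by
      rw [coeff_reflect, revAt_le (le_refl N)]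
      simp
    have h3 : q.coeff 0 = (starRingEnd ℂ) (p.coeff 0) := by
      simp [hq, coeff_map]
    rw [heq, h2, h3] at h1
    exact h1
  set lam : ℝ := (p.coeff 0).re with hlam
  have hc0 : p.coeff 0 = (lam : ℂ) := (Complex.conj_eq_iff_re.mp hreal0).symm
  have hpC : p = C ((lam : ℂ)) := by
    ext k
    rcases Nat.eq_zero_or_pos k with rfl | hk
    · simp [hc0]
    · rw [hcoeff k hk, coeff_C, if_neg (by omega)]
  exact ⟨lam, hpC, fun i => by rw [hpC, eval_C], fun i => by rw [hpC, eval_C]⟩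
end
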